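/- Let A⁽¹⁾, …, A⁽ᵏ⁾ be 3×3 pairwise comparison matrices, let w⁽ℓ⁾ be a positive eigenvector of A⁽ℓ⁾ for each ℓ, and let u be a positive eigenvector of the aggregate A⁽¹⁾ ⊕ ⋯ ⊕ A⁽ᵏ⁾. If w⁽ℓ⁾_i ≥ w⁽ℓ⁾_j for all ℓ = 1,…,k, then u_i ≥ u_j; moreover, if in addition w⁽ℓ⁾_i > w⁽ℓ⁾_j for at least one ℓ, then u_i > u_j. Hence the Eigenvector Method satisfies aggregation invariance when the number of alternatives is three. -/

import Mathlib

/-- A pairwise comparison matrix: all entries positive and `A j i = 1 / A i j`. -/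
def IsPCM {n : ℕ} (A : Matrix (Fin n) (Fin n) ℝ) : Prop :=
  (∀ i j, 0 < A i j) ∧ ∀ i j, A j i = 1 / A i j

/-- The aggregate (entrywise geometric mean) of the pairwise comparison matrices
`A 0, …, A (k-1)`. -/
noncomputable def agg {n k : ℕ} (A : Fin k → Matrix (Fin n) (Fin n) ℝ) :
    Matrix (Fin n) (Fin n) ℝ :=
  Matrix.of fun i j => (∏ ℓ, A ℓ i j) ^ ((1 : ℝ) / k)

open Finset Matrix

/-- Positive eigenvalue. -/
lemma eig_pos {n : ℕ} [NeZero n] {A : Matrix (Fin n) (Fin n) ℝ} (hA : ∀ i j, 0 < A i j)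
    {w : Fin n → ℝ} (hw : ∀ i, 0 < w i) {lam : ℝ} (h : A.mulVec w = lam • w) : 0 < lam := by
  have h0 := congrFun h 0
  simp only [Matrix.mulVec, dotProduct, Pi.smul_apply, smul_eq_mul] at h0
  have hs : 0 < ∑ t, A 0 t * w t :=
    Finset.sum_pos (fun t _ => mul_pos (hA 0 t) (hw t)) univ_nonempty
  nlinarith [hw 0]

/-- Eigenvalues of positive eigenvectors agree. -/
lemma eig_eq {n : ℕ} [NeZero n] {A : Matrix (Fin n) (Fin n) ℝ} (hA : ∀ i j, 0 < A i j)
    {w v : Fin n → ℝ} (hw : ∀ i, 0 < w i) (hv : ∀ i, 0 < v i) {lam mu : ℝ}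
    (h : A.mulVec w = lam • w) (h' : A.mulVec v = mu • v) : lam ≤ mu := by
  obtain ⟨i0, -, hmax⟩ := Finset.exists_max_image Finset.univ (fun i => w i / v i)
    Finset.univ_nonempty
  have key : ∀ t, w t ≤ (w i0 / v i0) * v t := by
    intro t
    have := hmax t (Finset.mem_univ t)
    calc w t = (w t / v t) * v t := by field_simp [ne_of_gt (hv t)]
    _ ≤ (w i0 / v i0) * v t := by
        exact mul_le_mul_of_nonneg_right this (le_of_lt (hv t))
  have h1 := congrFun h i0
  have h2 := congrFun h' i0
  simp only [Matrix.mulVec, dotProduct, Pi.smul_apply, smul_eq_mul] at h1 h2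
  have hle : ∑ t, A i0 t * w t ≤ (w i0 / v i0) * ∑ t, A i0 t * v t := by
    rw [Finset.mul_sum]
    refine Finset.sum_le_sum fun t _ => ?_
    have := key t
    calc A i0 t * w t ≤ A i0 t * ((w i0 / v i0) * v t) :=
      mul_le_mul_of_nonneg_left this (le_of_lt (hA i0 t))
    _ = w i0 / v i0 * (A i0 t * v t) := by ring
  rw [h1, h2] at hle
  have hvw : w i0 / v i0 * (mu * v i0) = mu * w i0 := by field_simp [ne_of_gt (hv i0)]
  rw [hvw] at hle
  have := hw i0
  nlinarith

/-- Uniqueness of positive eigenvector. -/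
lemma eig_unique {n : ℕ} [NeZero n] {A : Matrix (Fin n) (Fin n) ℝ} (hA : ∀ i j, 0 < A i j)
    {w v : Fin n → ℝ} (hw : ∀ i, 0 < w i) (hv : ∀ i, 0 < v i) {lam mu : ℝ}
    (h : A.mulVec w = lam • w) (h' : A.mulVec v = mu • v) :
    ∃ s : ℝ, 0 < s ∧ ∀ i, w i = s * v i := by
  have hlm : lam = mu := le_antisymm (eig_eq hA hw hv h h') (eig_eq hA hv hw h' h)
  subst hlm
  obtain ⟨i0, -, hmin⟩ := Finset.exists_min_image Finset.univ (fun i => w i / v i)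
    Finset.univ_nonempty
  set s := w i0 / v i0 with hs
  have hspos : 0 < s := div_pos (hw i0) (hv i0)
  refine ⟨s, hspos, ?_⟩
  have key : ∀ t, 0 ≤ w t - s * v t := by
    intro t
    have ht := hmin t (Finset.mem_univ t)
    have : s * v t ≤ (w t / v t) * v t := mul_le_mul_of_nonneg_right ht (le_of_lt (hv t))
    have h2 : (w t / v t) * v t = w t := by field_simp [ne_of_gt (hv t)]
    linarith [this, h2.ge]
  have hz0 : w i0 - s * v i0 = 0 := by
    have : s * v i0 = w i0 := by rw [hs]; field_simp [ne_of_gt (hv i0)]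
    linarith
  have h1 := congrFun h i0
  have h2 := congrFun h' i0
  simp only [Matrix.mulVec, dotProduct, Pi.smul_apply, smul_eq_mul] at h1 h2
  have hsum : ∑ t, A i0 t * (w t - s * v t) = 0 := by
    have : ∑ t, A i0 t * (w t - s * v t) = (∑ t, A i0 t * w t) - s * ∑ t, A i0 t * v t := by
      rw [Finset.mul_sum, ← Finset.sum_sub_distrib]
      congr 1; ext t; ring
    rw [this, h1, h2]
    linear_combination lam * hz0
  intro t
  have hall := (Finset.sum_eq_zero_iff_of_nonneg
    (fun t _ => mul_nonneg (le_of_lt (hA i0 t)) (key t))).mp hsum t (Finset.mem_univ t)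
  have := (mul_eq_zero.mp hall).resolve_left (ne_of_gt (hA i0 t))
  linarith

lemma pcm_diag_one {n : ℕ} {A : Matrix (Fin n) (Fin n) ℝ} (hA : IsPCM A) (i : Fin n) :
    A i i = 1 := by
  have h := hA.2 i i
  have hp := hA.1 i i
  have h2 : A i i * A i i = 1 := by
    field_simp at h
    linarith
  nlinarith

/-- The geometric-mean vector is an eigenvector of a 3×3 PCM. -/
lemma pcm_gm_eig {A : Matrix (Fin 3) (Fin 3) ℝ} (hA : IsPCM A) :
    ∃ lam : ℝ, A.mulVec (fun i => (∏ t, A i t) ^ ((1 : ℝ)/3))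
      = lam • (fun i => (∏ t, A i t) ^ ((1 : ℝ)/3)) := by
  obtain ⟨h1, h2⟩ := hA
  set a := A 0 1 with ha'
  set b := A 0 2 with hb'
  set c := A 1 2 with hc'
  have ha : 0 < a := h1 0 1
  have hb : 0 < b := h1 0 2
  have hc : 0 < c := h1 1 2
  set α := a ^ ((1:ℝ)/3) with hα'
  set β := b ^ ((1:ℝ)/3) with hβ'
  set γ := c ^ ((1:ℝ)/3) with hγ'
  have hα : 0 < α := Real.rpow_pos_of_pos ha _
  have hβ : 0 < β := Real.rpow_pos_of_pos hb _
  have hγ : 0 < γ := Real.rpow_pos_of_pos hc _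
  have hcube : ∀ x : ℝ, 0 < x → (x ^ ((1:ℝ)/3)) * (x ^ ((1:ℝ)/3)) * (x ^ ((1:ℝ)/3)) = x := by
    intro x hx
    rw [← Real.rpow_add hx, ← Real.rpow_add hx]
    norm_num
  have ha3 : a = α * α * α := (hcube a ha).symm
  have hb3 : b = β * β * β := (hcube b hb).symm
  have hc3 : c = γ * γ * γ := (hcube c hc).symm
  have hd0 : A 0 0 = 1 := pcm_diag_one ⟨h1, h2⟩ 0
  have hd1 : A 1 1 = 1 := pcm_diag_one ⟨h1, h2⟩ 1
  have hd2 : A 2 2 = 1 := pcm_diag_one ⟨h1, h2⟩ 2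
  have h10 : A 1 0 = 1 / a := h2 0 1
  have h20 : A 2 0 = 1 / b := h2 0 2
  have h21 : A 2 1 = 1 / c := h2 1 2
  have hv0 : (∏ t, A 0 t) ^ ((1 : ℝ)/3) = α * β := by
    rw [Fin.prod_univ_three, hd0, one_mul, ← ha', ← hb', Real.mul_rpow ha.le hb.le]
  have hv1 : (∏ t, A 1 t) ^ ((1 : ℝ)/3) = γ / α := by
    rw [Fin.prod_univ_three, hd1, h10, ← hc',
      show 1 / a * 1 * c = c / a by field_simp,
      Real.div_rpow hc.le ha.le]
  have hv2 : (∏ t, A 2 t) ^ ((1 : ℝ)/3) = 1 / (β * γ) := by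
    rw [Fin.prod_univ_three, hd2, h20, h21,
      show 1 / b * (1 / c) * 1 = 1 / (b * c) by field_simp,
      Real.div_rpow zero_le_one (mul_pos hb hc).le, Real.one_rpow,
      Real.mul_rpow hb.le hc.le]
  set lam := 1 + α * γ / β + β / (α * γ) with hlam'
  have e0 : A 0 0 * ((∏ t, A 0 t) ^ ((1 : ℝ)/3)) + A 0 1 * ((∏ t, A 1 t) ^ ((1 : ℝ)/3))
      + A 0 2 * ((∏ t, A 2 t) ^ ((1 : ℝ)/3)) = lam * ((∏ t, A 0 t) ^ ((1 : ℝ)/3)) := by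
    rw [hv0, hv1, hv2, hd0, ← ha', ← hb', hlam', ha3, hb3]
    field_simp
  have e1 : A 1 0 * ((∏ t, A 0 t) ^ ((1 : ℝ)/3)) + A 1 1 * ((∏ t, A 1 t) ^ ((1 : ℝ)/3))
      + A 1 2 * ((∏ t, A 2 t) ^ ((1 : ℝ)/3)) = lam * ((∏ t, A 1 t) ^ ((1 : ℝ)/3)) := by
    rw [hv0, hv1, hv2, hd1, h10, ← hc', hlam', ha3, hc3]
    field_simp
    ring
  have e2 : A 2 0 * ((∏ t, A 0 t) ^ ((1 : ℝ)/3)) + A 2 1 * ((∏ t, A 1 t) ^ ((1 : ℝ)/3))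
      + A 2 2 * ((∏ t, A 2 t) ^ ((1 : ℝ)/3)) = lam * ((∏ t, A 2 t) ^ ((1 : ℝ)/3)) := by
    rw [hv0, hv1, hv2, hd2, h20, h21, hlam', hb3, hc3]
    field_simp
    ring
  refine ⟨lam, ?_⟩
  funext i
  fin_cases i <;>
    simp only [Matrix.mulVec, dotProduct, Fin.sum_univ_three, Pi.smul_apply,
      smul_eq_mul]
  · exact e0
  · exact e1
  · exact e2

/-- Eigenvector weights of a 3×3 PCM are proportional to the geometric means of rows. -/
lemma pcm_eigvec_gm {A : Matrix (Fin 3) (Fin 3) ℝ} (hA : IsPCM A)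
    {w : Fin 3 → ℝ} (hw : ∀ i, 0 < w i) {lam : ℝ} (h : A.mulVec w = lam • w) :
    ∃ s : ℝ, 0 < s ∧ ∀ i, w i = s * (∏ t, A i t) ^ ((1 : ℝ)/3) := by
  obtain ⟨mu, hmu⟩ := pcm_gm_eig hA
  exact eig_unique hA.1 hw
    (fun i => Real.rpow_pos_of_pos (Finset.prod_pos fun t _ => hA.1 i t) _) h hmu


/-- The Eigenvector Method satisfies aggregation invariance for three
alternatives: if `w ℓ` is a positive eigenvector of the 3×3 pairwise comparison
matrix `A ℓ` for each `ℓ` and `u` is a positive eigenvector of the aggregate,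
then `w ℓ i ≥ w ℓ j` for all `ℓ` implies `u i ≥ u j`, strictly so if the
inequality is strict for at least one `ℓ`. -/
theorem em_aggregation_invariant_three {k : ℕ} (hk : 0 < k)
    (A : Fin k → Matrix (Fin 3) (Fin 3) ℝ) (hA : ∀ ℓ, IsPCM (A ℓ))
    (w : Fin k → Fin 3 → ℝ) (hw : ∀ ℓ i, 0 < w ℓ i)
    (lam : Fin k → ℝ) (heig : ∀ ℓ, (A ℓ).mulVec (w ℓ) = lam ℓ • w ℓ)
    (u : Fin 3 → ℝ) (hu : ∀ i, 0 < u i)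
    (mu : ℝ) (hueig : (agg A).mulVec u = mu • u)
    (i j : Fin 3) (hij : ∀ ℓ, w ℓ j ≤ w ℓ i) :
    u j ≤ u i ∧ ((∃ ℓ, w ℓ j < w ℓ i) → u j < u i) := by
  have hkR : (0 : ℝ) < 1 / k := by
    have : (0 : ℝ) < (k : ℝ) := by exact_mod_cast hk
    positivity
  set P : Fin k → Fin 3 → ℝ := fun ℓ i => ∏ t, A ℓ i t with hP
  have hPpos : ∀ ℓ i, 0 < P ℓ i := fun ℓ i => Finset.prod_pos fun t _ => (hA ℓ).1 i t
  -- transfer comparisons to row products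
  have gm : ∀ ℓ, ∃ s : ℝ, 0 < s ∧ ∀ i, w ℓ i = s * (P ℓ i) ^ ((1 : ℝ)/3) := fun ℓ =>
    pcm_eigvec_gm (hA ℓ) (hw ℓ) (heig ℓ)
  have hPle : ∀ ℓ, P ℓ j ≤ P ℓ i := by
    intro ℓ
    obtain ⟨s, hs, hwgm⟩ := gm ℓ
    have h0 := hij ℓ
    rw [hwgm i, hwgm j] at h0
    have h3 := le_of_mul_le_mul_left h0 hs
    exact (Real.rpow_le_rpow_iff (hPpos ℓ j).le (hPpos ℓ i).le (by norm_num)).mp h3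
  have hPlt : ∀ ℓ, w ℓ j < w ℓ i → P ℓ j < P ℓ i := by
    intro ℓ h0
    obtain ⟨s, hs, hwgm⟩ := gm ℓ
    rw [hwgm i, hwgm j] at h0
    have h3 := lt_of_mul_lt_mul_left h0 hs.le
    exact (Real.rpow_lt_rpow_iff (hPpos ℓ j).le (hPpos ℓ i).le (by norm_num)).mp h3
  -- the aggregate is a PCM
  have haggpos : ∀ i j, 0 < agg A i j := fun i j =>
    Real.rpow_pos_of_pos (Finset.prod_pos fun ℓ _ => (hA ℓ).1 i j) _
  have haggrec : ∀ i j, agg A j i = 1 / agg A i j := by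
    intro i j
    have hprod : (∏ ℓ, A ℓ j i) = (∏ ℓ, A ℓ i j)⁻¹ := by
      rw [← Finset.prod_inv_distrib]
      exact Finset.prod_congr rfl fun ℓ _ => by rw [(hA ℓ).2 i j, one_div]
    show (∏ ℓ, A ℓ j i) ^ ((1 : ℝ)/k) = 1 / (∏ ℓ, A ℓ i j) ^ ((1 : ℝ)/k)
    rw [hprod, Real.inv_rpow (Finset.prod_pos fun ℓ _ => (hA ℓ).1 i j).le]
    exact (one_div _).symm
  obtain ⟨s, hs, hugm⟩ := pcm_eigvec_gm ⟨haggpos, haggrec⟩ hu hueig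
  -- row products of the aggregate
  have hQ : ∀ i, (∏ t, agg A i t) = (∏ ℓ, P ℓ i) ^ ((1 : ℝ)/k) := by
    intro i
    calc (∏ t, agg A i t) = ∏ t, (∏ ℓ, A ℓ i t) ^ ((1 : ℝ)/k) := rfl
      _ = (∏ t, ∏ ℓ, A ℓ i t) ^ ((1 : ℝ)/k) :=
        Real.finset_prod_rpow _ _
          (fun t _ => (Finset.prod_pos fun ℓ _ => (hA ℓ).1 i t).le) _
      _ = (∏ ℓ, ∏ t, A ℓ i t) ^ ((1 : ℝ)/k) := by rw [Finset.prod_comm]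
  have hRposi : 0 < ∏ ℓ, P ℓ i := Finset.prod_pos fun ℓ _ => hPpos ℓ i
  have hRposj : 0 < ∏ ℓ, P ℓ j := Finset.prod_pos fun ℓ _ => hPpos ℓ j
  have hQposj : 0 < ∏ t, agg A j t := Finset.prod_pos fun t _ => haggpos j t
  constructor
  · rw [hugm i, hugm j]
    refine mul_le_mul_of_nonneg_left ?_ hs.le
    refine Real.rpow_le_rpow hQposj.le ?_ (by norm_num)
    rw [hQ i, hQ j]
    exact Real.rpow_le_rpow hRposj.le
      (Finset.prod_le_prod (fun ℓ _ => (hPpos ℓ j).le) fun ℓ _ => hPle ℓ) hkR.le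
  · rintro ⟨ℓ0, hℓ0⟩
    rw [hugm i, hugm j]
    refine mul_lt_mul_of_pos_left ?_ hs
    refine Real.rpow_lt_rpow hQposj.le ?_ (by norm_num)
    rw [hQ i, hQ j]
    refine Real.rpow_lt_rpow hRposj.le ?_ hkR
    exact Finset.prod_lt_prod (fun ℓ _ => hPpos ℓ j) (fun ℓ _ => hPle ℓ)
      ⟨ℓ0, Finset.mem_univ ℓ0, hPlt ℓ0 hℓ0⟩
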